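/- Let d be a positive integer and p, Z > 0 real with p < 1. Then the set R_d(p,Z) := {(x_1,...,x_d) ∈ Z_{≥0}^d : (x_1 + log p^{-1})···(x_d + log p^{-1}) ≤ Z} is contained in the union over (e_1,...,e_d) ∈ E of the sets {(y_1,...,y_d) ∈ Z_{≥0}^d : y_1/2^{e_1} + ... + y_d/2^{e_d} ≤ 1}, where E := {(e_1,...,e_d) ∈ Z^d : e_i ≥ log_2 log p^{-1} for all i, and e_1 + ... + e_d ≤ d + d log_2 d + log_2 Z}. -/

import Mathlib

/-- Covering the shifted hyperboloid region by regions under hyperplanes: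
every point of `R_d(p,Z)` lies below one of the hyperplanes indexed by `E`. -/
theorem stmt5 (d : ℕ) (hd : 0 < d) (p Z : ℝ) (hp : 0 < p) (hp1 : p < 1) (hZ : 0 < Z)
    (x : Fin d → ℕ)
    (hx : ∏ i, ((x i : ℝ) + Real.log p⁻¹) ≤ Z) :
    ∃ e : Fin d → ℤ,
      (∀ i, Real.logb 2 (Real.log p⁻¹) ≤ (e i : ℝ)) ∧
      (∑ i, (e i : ℝ)) ≤ d + d * Real.logb 2 d + Real.logb 2 Z ∧
      ∑ i, (x i : ℝ) / (2 : ℝ) ^ (e i) ≤ 1 := by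
  set L : ℝ := Real.log p⁻¹ with hLdef
  have hL : 0 < L := Real.log_pos ((one_lt_inv₀ hp).mpr hp1)
  have hxL : ∀ i, 0 < (x i : ℝ) + L := fun i => by positivity
  have hdR : (0:ℝ) < d := by exact_mod_cast hd
  refine ⟨fun i => ⌈Real.logb 2 ((d:ℝ) * ((x i : ℝ) + L))⌉, ?_, ?_, ?_⟩
  · intro i
    have h1 : L ≤ (d:ℝ) * ((x i : ℝ) + L) := by
      have : (1:ℝ) ≤ d := by exact_mod_cast hd
      nlinarith [hxL i, (x i).cast_nonneg (α := ℝ)]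
    calc Real.logb 2 L ≤ Real.logb 2 ((d:ℝ) * ((x i : ℝ) + L)) :=
          Real.logb_le_logb_of_le (by norm_num) hL h1
      _ ≤ _ := Int.le_ceil _
  · have hprodpos : (0:ℝ) < ∏ i, ((x i : ℝ) + L) := Finset.prod_pos fun i _ => hxL i
    have hstep : ∀ i : Fin d,
        ((⌈Real.logb 2 ((d:ℝ) * ((x i : ℝ) + L))⌉ : ℝ))
          ≤ 1 + Real.logb 2 d + Real.logb 2 ((x i : ℝ) + L) := by
      intro i
      have := Int.ceil_lt_add_one (Real.logb 2 ((d:ℝ) * ((x i : ℝ) + L)))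
      have hmul : Real.logb 2 ((d:ℝ) * ((x i : ℝ) + L))
          = Real.logb 2 d + Real.logb 2 ((x i : ℝ) + L) :=
        Real.logb_mul (ne_of_gt hdR) (ne_of_gt (hxL i))
      linarith
    calc (∑ i, ((⌈Real.logb 2 ((d:ℝ) * ((x i : ℝ) + L))⌉ : ℝ)))
        ≤ ∑ i : Fin d, (1 + Real.logb 2 d + Real.logb 2 ((x i : ℝ) + L)) :=
          Finset.sum_le_sum fun i _ => hstep i
      _ = d + d * Real.logb 2 d + ∑ i, Real.logb 2 ((x i : ℝ) + L) := by
          rw [Finset.sum_add_distrib, Finset.sum_add_distrib]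
          simp [Finset.sum_const, mul_comm]
      _ = d + d * Real.logb 2 d + Real.logb 2 (∏ i, ((x i : ℝ) + L)) := by
          have : ∑ i, Real.logb 2 ((x i : ℝ) + L)
              = Real.logb 2 (∏ i, ((x i : ℝ) + L)) := by
            simp only [Real.logb]
            rw [← Finset.sum_div, ← Real.log_prod fun i _ => ne_of_gt (hxL i)]
          rw [this]
      _ ≤ d + d * Real.logb 2 d + Real.logb 2 Z := by
          have := Real.logb_le_logb_of_le (b := 2) (by norm_num) hprodpos hx
          linarith
  · have hterm : ∀ i : Fin d,
        (x i : ℝ) / (2:ℝ) ^ (⌈Real.logb 2 ((d:ℝ) * ((x i : ℝ) + L))⌉) ≤ 1 / d := by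
      intro i
      have hpos : (0:ℝ) < (d:ℝ) * ((x i : ℝ) + L) := mul_pos hdR (hxL i)
      have hpow : (d:ℝ) * ((x i : ℝ) + L)
          ≤ (2:ℝ) ^ (⌈Real.logb 2 ((d:ℝ) * ((x i : ℝ) + L))⌉) := by
        have h1 : (d:ℝ) * ((x i : ℝ) + L)
            = (2:ℝ) ^ (Real.logb 2 ((d:ℝ) * ((x i : ℝ) + L))) :=
          (Real.rpow_logb (by norm_num) (by norm_num) hpos).symm
        have h2 : (2:ℝ) ^ (Real.logb 2 ((d:ℝ) * ((x i : ℝ) + L)))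
            ≤ (2:ℝ) ^ ((⌈Real.logb 2 ((d:ℝ) * ((x i : ℝ) + L))⌉ : ℝ)) :=
          Real.rpow_le_rpow_of_exponent_le (by norm_num) (Int.le_ceil _)
        rw [Real.rpow_intCast] at h2
        linarith
      have hpow0 : (0:ℝ) < (2:ℝ) ^ (⌈Real.logb 2 ((d:ℝ) * ((x i : ℝ) + L))⌉) :=
        zpow_pos (by norm_num) _
      calc (x i : ℝ) / (2:ℝ) ^ (⌈Real.logb 2 ((d:ℝ) * ((x i : ℝ) + L))⌉)
          ≤ (x i : ℝ) / ((d:ℝ) * ((x i : ℝ) + L)) :=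
            div_le_div_of_nonneg_left ((x i).cast_nonneg) hpos hpow
        _ ≤ 1 / d := by
            rw [div_le_div_iff₀ hpos hdR]
            nlinarith [hL, (x i).cast_nonneg (α := ℝ)]
    calc (∑ i, (x i : ℝ) / (2:ℝ) ^ (⌈Real.logb 2 ((d:ℝ) * ((x i : ℝ) + L))⌉))
        ≤ ∑ i : Fin d, (1:ℝ) / d := Finset.sum_le_sum fun i _ => hterm i
      _ = 1 := by
          rw [Finset.sum_const]
          simp only [Finset.card_univ, Fintype.card_fin, nsmul_eq_mul]
          field_simp [hdR.ne']
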